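/- Let k ≥ 1 be an integer and define Ψ : S¹ × (ℂ² ∖ {0}) → ℂ² × S³ by Ψ(s, (z₁, z₂)) = ((s·z₁ᵏ, s·z₂ᵏ), (z₁/‖z‖, z₂/‖z‖)), where ‖z‖ = √(|z₁|² + |z₂|²). Then: (i) Ψ is injective; (ii) the image of Ψ is exactly S(−k) ∖ ({0} × S³), where S(−k) = {((z₁, z₂), (u₁, u₂)) ∈ ℂ² × S³ : z₁u₂ᵏ = z₂u₁ᵏ}; (iii) for every t ∈ S¹, Ψ(tᵏs, (t⁻¹z₁, t⁻¹z₂)) = α_k(t, Ψ(s, (z₁, z₂))), where α_k(t, ((z₁, z₂), (u₁, u₂))) = ((z₁, z₂), (t⁻¹u₁, t⁻¹u₂)). -/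

import Mathlib

/-- The unit 3-sphere `S³ = {(u₁, u₂) ∈ ℂ² : |u₁|² + |u₂|² = 1}`. -/
def Sphere3 : Set (ℂ × ℂ) := {u | ‖u.1‖ ^ 2 + ‖u.2‖ ^ 2 = 1}

/-- The local model `S(−k) = {((z₁, z₂), (u₁, u₂)) ∈ ℂ² × S³ : z₁u₂ᵏ = z₂u₁ᵏ}`. -/
def Sneg (k : ℕ) : Set ((ℂ × ℂ) × ℂ × ℂ) :=
  {p | p.2 ∈ Sphere3 ∧ p.1.1 * p.2.2 ^ k = p.1.2 * p.2.1 ^ k}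

/-- The `S¹`-equivariant embedding `Ψ : S¹ × (ℂ² ∖ {0}) → ℂ² × S³`,
`Ψ(s, (z₁, z₂)) = ((s·z₁ᵏ, s·z₂ᵏ), (z₁/‖z‖, z₂/‖z‖))`, extended by the same formula. -/
noncomputable def PsiMap (k : ℕ) : ℂ × ℂ × ℂ → (ℂ × ℂ) × ℂ × ℂ :=
  fun p =>
    ((p.1 * p.2.1 ^ k, p.1 * p.2.2 ^ k),
      (p.2.1 / ((Real.sqrt (‖p.2.1‖ ^ 2 + ‖p.2.2‖ ^ 2) : ℝ) : ℂ),
        p.2.2 / ((Real.sqrt (‖p.2.1‖ ^ 2 + ‖p.2.2‖ ^ 2) : ℝ) : ℂ)))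


lemma psi_norm_pos {z₁ z₂ : ℂ} (hz : (z₁, z₂) ≠ (0 : ℂ × ℂ)) :
    0 < Real.sqrt (‖z₁‖ ^ 2 + ‖z₂‖ ^ 2) := by
  apply Real.sqrt_pos.2
  rcases eq_or_ne z₁ 0 with h1 | h1
  · have h2 : z₂ ≠ 0 := fun h2 => hz (by simp [Prod.ext_iff, h1, h2])
    have := norm_pos_iff.mpr h2; positivity
  · have := norm_pos_iff.mpr h1; positivity

lemma psi_helper (k : ℕ) (hk : 1 ≤ k) (w₁ w₂ u₁ u₂ : ℂ)
    (hu : ‖u₁‖ ^ 2 + ‖u₂‖ ^ 2 = 1)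
    (heq : w₁ * u₂ ^ k = w₂ * u₁ ^ k) (hu₁ : u₁ ≠ 0) (hw₁ : w₁ ≠ 0) :
    ∃ s z₁ z₂ : ℂ, ‖s‖ = 1 ∧ (z₁, z₂) ≠ (0 : ℂ × ℂ) ∧
      s * z₁ ^ k = w₁ ∧ s * z₂ ^ k = w₂ ∧
      z₁ / ((Real.sqrt (‖z₁‖ ^ 2 + ‖z₂‖ ^ 2) : ℝ) : ℂ) = u₁ ∧
      z₂ / ((Real.sqrt (‖z₁‖ ^ 2 + ‖z₂‖ ^ 2) : ℝ) : ℂ) = u₂ := by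
  have hu₁k : u₁ ^ k ≠ 0 := pow_ne_zero _ hu₁
  set c : ℂ := w₁ / u₁ ^ k with hc_def
  have hc : c ≠ 0 := div_ne_zero hw₁ hu₁k
  set a : ℝ := ‖c‖ with ha_def
  have ha : 0 < a := norm_pos_iff.mpr hc
  set r : ℝ := a ^ ((k : ℝ)⁻¹) with hr_def
  have hr : 0 < r := Real.rpow_pos_of_pos ha _
  have hk0 : (k : ℝ) ≠ 0 := by positivity
  have hrk : r ^ k = a := by
    rw [hr_def, ← Real.rpow_natCast (a ^ ((k:ℝ)⁻¹)) k, ← Real.rpow_mul ha.le,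
      inv_mul_cancel₀ hk0, Real.rpow_one]
  have hrc : ((r : ℂ)) ^ k = (a : ℂ) := by rw [← Complex.ofReal_pow, hrk]
  have hrc0 : (r : ℂ) ≠ 0 := by exact_mod_cast hr.ne'
  have hac0 : (a : ℂ) ≠ 0 := by exact_mod_cast ha.ne'
  refine ⟨c / (a : ℂ), (r : ℂ) * u₁, (r : ℂ) * u₂, ?_, ?_, ?_, ?_, ?_, ?_⟩
  · rw [norm_div, Complex.norm_real, Real.norm_eq_abs, abs_of_pos ha, ← ha_def, div_self ha.ne']
  · intro h
    exact (mul_ne_zero hrc0 hu₁) (congrArg Prod.fst h)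
  · rw [mul_pow, hrc]
    field_simp [hc_def]
    rw [hc_def, div_mul_cancel₀ _ hu₁k]
  · rw [mul_pow, hrc]
    have : c * u₂ ^ k = w₂ := by
      rw [hc_def, div_mul_eq_mul_div, heq, mul_div_assoc, div_self hu₁k, mul_one]
    field_simp [this.symm]
    exact this
  all_goals {
    have hN : Real.sqrt (‖(r:ℂ) * u₁‖ ^ 2 + ‖(r:ℂ) * u₂‖ ^ 2) = r := by
      have h1 : ‖(r:ℂ) * u₁‖ ^ 2 + ‖(r:ℂ) * u₂‖ ^ 2 = r ^ 2 := by
        simp only [norm_mul, Complex.norm_real, Real.norm_eq_abs, abs_of_pos hr, mul_pow]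
        rw [← mul_add, hu, mul_one]
      rw [h1, Real.sqrt_sq hr.le]
    rw [hN, mul_div_cancel_left₀ _ hrc0] }

theorem psiMap_injective_image_equivariant (k : ℕ) (hk : 1 ≤ k) :
    Set.InjOn (PsiMap k) {p : ℂ × ℂ × ℂ | ‖p.1‖ = 1 ∧ p.2 ≠ 0} ∧
    PsiMap k '' {p : ℂ × ℂ × ℂ | ‖p.1‖ = 1 ∧ p.2 ≠ 0} =
      Sneg k \ (({0} : Set (ℂ × ℂ)) ×ˢ Sphere3) ∧
    (∀ t s z₁ z₂ : ℂ, ‖t‖ = 1 → ‖s‖ = 1 → (z₁, z₂) ≠ (0 : ℂ × ℂ) →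
      PsiMap k (t ^ k * s, (t⁻¹ * z₁, t⁻¹ * z₂)) =
        ((PsiMap k (s, (z₁, z₂))).1,
          (t⁻¹ * (PsiMap k (s, (z₁, z₂))).2.1, t⁻¹ * (PsiMap k (s, (z₁, z₂))).2.2))) := by
  have hk0 : k ≠ 0 := by omega
  refine ⟨?_, ?_, ?_⟩
  · -- injectivity
    rintro ⟨s, z₁, z₂⟩ ⟨hs, hz⟩ ⟨s', w₁, w₂⟩ ⟨hs', hw⟩ h
    simp only [PsiMap, Prod.mk.injEq] at h
    obtain ⟨⟨h1, h2⟩, h3, h4⟩ := h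
    have hN := psi_norm_pos hz
    have hM := psi_norm_pos hw
    have habs1 : ‖z₁‖ = ‖w₁‖ := by
      have := congrArg (‖·‖) h1
      simp only [norm_mul, norm_pow, hs, hs', one_mul] at this
      exact (pow_left_inj₀ (norm_nonneg _) (norm_nonneg _) hk0).mp this
    have habs2 : ‖z₂‖ = ‖w₂‖ := by
      have := congrArg (‖·‖) h2
      simp only [norm_mul, norm_pow, hs, hs', one_mul] at this
      exact (pow_left_inj₀ (norm_nonneg _) (norm_nonneg _) hk0).mp this
    rw [habs1, habs2] at h3 h4 hN
    have hz1 : z₁ = w₁ := by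
      have := congrArg (· * ((Real.sqrt (‖w₁‖ ^ 2 + ‖w₂‖ ^ 2) : ℝ) : ℂ)) h3
      have hne : ((Real.sqrt (‖w₁‖ ^ 2 + ‖w₂‖ ^ 2) : ℝ) : ℂ) ≠ 0 := by
        exact_mod_cast hN.ne'
      simpa [div_mul_cancel₀, hne] using this
    have hz2 : z₂ = w₂ := by
      have := congrArg (· * ((Real.sqrt (‖w₁‖ ^ 2 + ‖w₂‖ ^ 2) : ℝ) : ℂ)) h4
      have hne : ((Real.sqrt (‖w₁‖ ^ 2 + ‖w₂‖ ^ 2) : ℝ) : ℂ) ≠ 0 := by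
        exact_mod_cast hN.ne'
      simpa [div_mul_cancel₀, hne] using this
    subst hz1 hz2
    have hss : s = s' := by
      rcases eq_or_ne z₁ 0 with h0 | h0
      · have h0' : z₂ ≠ 0 := fun h2 => hz (by simp [Prod.ext_iff, h0, h2])
        exact mul_right_cancel₀ (pow_ne_zero k h0') h2
      · exact mul_right_cancel₀ (pow_ne_zero k h0) h1
    simp [hss]
  · -- image
    ext ⟨⟨w₁, w₂⟩, u₁, u₂⟩
    constructor
    · rintro ⟨⟨s, z₁, z₂⟩, ⟨hs, hz⟩, hpsi⟩
      rw [← hpsi]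
      have hN := psi_norm_pos hz
      set N := Real.sqrt (‖z₁‖ ^ 2 + ‖z₂‖ ^ 2) with hNdef
      have hN2 : N ^ 2 = ‖z₁‖ ^ 2 + ‖z₂‖ ^ 2 := by
        rw [hNdef]; exact Real.sq_sqrt (by positivity)
      have hNC : ((N : ℝ) : ℂ) ≠ 0 := by exact_mod_cast hN.ne'
      constructor
      · constructor
        · show ‖z₁ / _‖ ^ 2 + ‖z₂ / _‖ ^ 2 = 1
          rw [norm_div, norm_div, Complex.norm_real, Real.norm_eq_abs, abs_of_pos hN, div_pow, div_pow,
            ← add_div, ← hN2, div_self (by positivity)]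
        · show s * z₁ ^ k * (z₂ / _) ^ k = s * z₂ ^ k * (z₁ / _) ^ k
          rw [div_pow, div_pow]
          ring
      · rintro ⟨hmem0, -⟩
        have h0 : (s * z₁ ^ k, s * z₂ ^ k) = (0 : ℂ × ℂ) := hmem0
        have hs0 : s ≠ 0 := by
          intro h; rw [h] at hs; simp at hs
        have hz10 : z₁ = 0 := by
          have := congrArg Prod.fst h0
          simpa [hs0, pow_eq_zero_iff hk0] using this
        have hz20 : z₂ = 0 := by
          have := congrArg Prod.snd h0
          simpa [hs0, pow_eq_zero_iff hk0] using this
        exact hz (by simp [Prod.ext_iff, hz10, hz20])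
    · rintro ⟨⟨hu, heq⟩, hnot⟩
      have hu' : ‖u₁‖ ^ 2 + ‖u₂‖ ^ 2 = 1 := hu
      have hw0 : (w₁, w₂) ≠ (0 : ℂ × ℂ) := by
        intro h
        exact hnot ⟨by simp [h], hu⟩
      have hcase : u₁ ≠ 0 ∨ u₂ ≠ 0 := by
        by_contra h
        push_neg at h
        rw [h.1, h.2] at hu'
        simp at hu'
      rcases hcase with hu₁ | hu₂
      · have hw₁ : w₁ ≠ 0 := by
          intro h
          have : w₂ * u₁ ^ k = 0 := by rw [← heq, h, zero_mul]
          have hw2 : w₂ = 0 := by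
            rcases mul_eq_zero.mp this with h' | h'
            · exact h'
            · exact absurd h' (pow_ne_zero _ hu₁)
          exact hw0 (by simp [Prod.ext_iff, h, hw2])
        obtain ⟨s, z₁, z₂, hs, hz, e1, e2, e3, e4⟩ :=
          psi_helper k hk w₁ w₂ u₁ u₂ hu' heq hu₁ hw₁
        exact ⟨(s, z₁, z₂), ⟨hs, hz⟩, by simp only [PsiMap, e1, e2, e3, e4]⟩
      · have hw₂ : w₂ ≠ 0 := by
          intro h
          have : w₁ * u₂ ^ k = 0 := by rw [heq, h, zero_mul]
          have hw1 : w₁ = 0 := by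
            rcases mul_eq_zero.mp this with h' | h'
            · exact h'
            · exact absurd h' (pow_ne_zero _ hu₂)
          exact hw0 (by simp [Prod.ext_iff, hw1, h])
        obtain ⟨s, z₂, z₁, hs, hz, e2, e1, e4, e3⟩ :=
          psi_helper k hk w₂ w₁ u₂ u₁ (by rw [add_comm]; exact hu') heq.symm hu₂ hw₂
        have hzz : (z₁, z₂) ≠ (0 : ℂ × ℂ) := by
          intro h
          exact hz (by simp [Prod.ext_iff] at h ⊢; exact ⟨h.2, h.1⟩)
        refine ⟨(s, z₁, z₂), ⟨hs, hzz⟩, ?_⟩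
        rw [add_comm (‖z₂‖ ^ 2)] at e3 e4
        simp only [PsiMap, e1, e2, e3, e4]
  · -- equivariance
    intro t s z₁ z₂ ht hs hz
    have ht0 : t ≠ 0 := by intro h; rw [h] at ht; simp at ht
    have hti : ‖t⁻¹‖ = 1 := by rw [norm_inv, ht, inv_one]
    have hNeq : ‖t⁻¹ * z₁‖ ^ 2 + ‖t⁻¹ * z₂‖ ^ 2 =
        ‖z₁‖ ^ 2 + ‖z₂‖ ^ 2 := by
      simp [norm_mul, hti]
    simp only [PsiMap, hNeq, Prod.mk.injEq]
    refine ⟨⟨?_, ?_⟩, ?_, ?_⟩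
    · rw [mul_pow, inv_pow]; field_simp
    · rw [mul_pow, inv_pow]; field_simp
    · rw [mul_div_assoc]
    · rw [mul_div_assoc]
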